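/- (Lemma 6.2, closure property for three fixed points.) Under the three-vertex hypotheses, for all β ∈ β̂, γ ∈ γ̂ and δ ∈ δ̂ one has β + γ ∈ δ̂, γ + δ ∈ β̂, and β + δ ∈ γ̂. -/
import Mathlib


/-- Two multisets of vectors of `V` are *congruent mod `ρ`* if their images under the
quotient map `V → V ⧸ span {ρ}` are equal as multisets. -/
def CongMod {V : Type*} [AddCommGroup V] [Module (ZMod 2) V] (ρ : V)
    (A B : Multiset V) : Prop :=
  A.map ⇑(Submodule.span (ZMod 2) {ρ}).mkQ = B.map ⇑(Submodule.span (ZMod 2) {ρ}).mkQ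

lemma key_shift {V : Type*} [AddCommGroup V] [Module (ZMod 2) V] (ρ : V)
    (C D : Multiset V)
    (h : C.map ⇑(Submodule.span (ZMod 2) {ρ}).mkQ
        = D.map ⇑(Submodule.span (ZMod 2) {ρ}).mkQ)
    (hdisj : ∀ v, v ∈ C → v ∈ D → False)
    {γ : V} (hγ : γ ∈ C) : ρ + γ ∈ D := by
  set f := (Submodule.span (ZMod 2) {ρ}).mkQ with hf
  have hmem : f γ ∈ D.map ⇑f := by
    rw [← h]; exact Multiset.mem_map_of_mem _ hγ
  obtain ⟨d, hd, hdγ⟩ := Multiset.mem_map.mp hmem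
  have hsub : d - γ ∈ Submodule.span (ZMod 2) {ρ} := by
    rw [← Submodule.Quotient.eq]
    exact hdγ
  obtain ⟨a, ha⟩ := Submodule.mem_span_singleton.mp hsub
  rcases (by decide : ∀ b : ZMod 2, b = 0 ∨ b = 1) a with h0 | h1
  · rw [h0, zero_smul] at ha
    have : d = γ := by
      have := ha.symm
      rwa [sub_eq_zero] at this
    exact absurd hd (fun hh => hdisj γ hγ (this ▸ hh))
  · rw [h1, one_smul] at ha
    have : d = ρ + γ := by
      rw [ha]; abel
    rwa [← this]

theorem three_fixed_points_closure
    {V : Type*} [AddCommGroup V] [Module (ZMod 2) V] [FiniteDimensional (ZMod 2) V]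
    (k n : ℕ) (hk : Module.finrank (ZMod 2) V = k) (hk2 : 2 ≤ k)
    (hn : 0 < n) (hneven : Even n)
    (B C D : Multiset V)
    (hB0 : ∀ v ∈ B, v ≠ (0 : V)) (hC0 : ∀ v ∈ C, v ≠ (0 : V)) (hD0 : ∀ v ∈ D, v ≠ (0 : V))
    (hcardB : Multiset.card B = n / 2) (hcardC : Multiset.card C = n / 2)
    (hcardD : Multiset.card D = n / 2)
    (hBC : ∀ v, v ∈ B → v ∈ C → False) (hBD : ∀ v, v ∈ B → v ∈ D → False)
    (hCD : ∀ v, v ∈ C → v ∈ D → False)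
    (Ap Aq Ar : Multiset V)
    (hAp : Ap = B + C) (hAq : Aq = B + D) (hAr : Ar = D + C)
    (hspanp : Submodule.span (ZMod 2) {v : V | v ∈ Ap} = ⊤)
    (hspanq : Submodule.span (ZMod 2) {v : V | v ∈ Aq} = ⊤)
    (hspanr : Submodule.span (ZMod 2) {v : V | v ∈ Ar} = ⊤)
    (hP2B : ∀ β ∈ B, CongMod β Ap Aq)
    (hP2C : ∀ γ ∈ C, CongMod γ Ap Ar)
    (hP2D : ∀ δ ∈ D, CongMod δ Aq Ar) :
    ∀ β ∈ B, ∀ γ ∈ C, ∀ δ ∈ D, β + γ ∈ D ∧ γ + δ ∈ B ∧ β + δ ∈ C := by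
  intro β hβ γ hγ δ hδ
  refine ⟨?_, ?_, ?_⟩
  · -- β + γ ∈ D : from CongMod β Ap Aq, cancel B
    have h := hP2B β hβ
    unfold CongMod at h
    rw [hAp, hAq, Multiset.map_add, Multiset.map_add] at h
    have h' := add_left_cancel h
    exact key_shift β C D h' hCD hγ
  · -- γ + δ ∈ B : from CongMod γ Ap Ar, cancel C
    have h := hP2C γ hγ
    unfold CongMod at h
    rw [hAp, hAr, Multiset.map_add, Multiset.map_add] at h
    have h' := add_right_cancel h
    exact key_shift γ D B h'.symm (fun v hv hw => hBD v hw hv) hδ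
  · -- β + δ ∈ C : from CongMod δ Aq Ar, cancel D
    have h := hP2D δ hδ
    unfold CongMod at h
    rw [hAq, hAr, Multiset.map_add, Multiset.map_add, add_comm (Multiset.map _ D)] at h
    have h' := add_right_cancel h
    have := key_shift δ B C h' hBC hβ
    rwa [add_comm] at this
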